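/- If M is a sample Fréchet median with respect to the adjacency spectral pseudometric (λ(M) minimizes ∑_k ‖λ - λ(A^{(k)})‖ over realizable spectra), and there exists k₀ with ‖λ(A^{(k₀)})‖ ≤ ‖λ̄‖, then ‖λ(M)‖ ≤ 3√(2·ē_N). -/

import Mathlib

open Finset

/-- `A` is the adjacency matrix of a simple labeled graph on `n` vertices:
symmetric, `{0,1}`-valued, zero diagonal. -/
def IsAdj {n : ℕ} (A : Matrix (Fin n) (Fin n) ℝ) : Prop :=
  (∀ i j, A i j = 0 ∨ A i j = 1) ∧ (∀ i j, A i j = A j i) ∧ (∀ i, A i i = 0)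

/-- Number of edges `e(A) = ∑_{i<j} a_{ij}`. -/
def edges {n : ℕ} (A : Matrix (Fin n) (Fin n) ℝ) : ℝ :=
  ∑ i : Fin n, ∑ j : Fin n, if i < j then A i j else 0

/-- Hamming distance `d_H(A,B) = ∑_{i<j} |a_{ij} - b_{ij}|`. -/
def hammingD {n : ℕ} (A B : Matrix (Fin n) (Fin n) ℝ) : ℝ :=
  ∑ i : Fin n, ∑ j : Fin n, if i < j then |A i j - B i j| else 0

/-- Euclidean norm of a vector in `ℝⁿ`. -/
noncomputable def vnorm {n : ℕ} (v : Fin n → ℝ) : ℝ :=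
  Real.sqrt (∑ i : Fin n, v i ^ 2)

lemma vnorm_eq {n : ℕ} (v : Fin n → ℝ) :
    vnorm v = ‖(WithLp.equiv 2 (Fin n → ℝ)).symm v‖ := by
  rw [EuclideanSpace.norm_eq]
  simp [vnorm, Real.norm_eq_abs, sq_abs]

lemma vnorm_nonneg {n : ℕ} (v : Fin n → ℝ) : 0 ≤ vnorm v := Real.sqrt_nonneg _

lemma vnorm_tri {n : ℕ} (u v : Fin n → ℝ) : vnorm u ≤ vnorm (u - v) + vnorm v := by
  rw [vnorm_eq, vnorm_eq, vnorm_eq]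
  have h : (WithLp.equiv 2 (Fin n → ℝ)).symm u =
      (WithLp.equiv 2 (Fin n → ℝ)).symm (u - v) + (WithLp.equiv 2 (Fin n → ℝ)).symm v := by
    apply PiLp.ext; intro i; simp [Pi.sub_apply]
  rw [h]
  exact norm_add_le _ _

lemma vnorm_sub_le {n : ℕ} (u v : Fin n → ℝ) : vnorm (u - v) ≤ vnorm u + vnorm v := by
  rw [vnorm_eq, vnorm_eq, vnorm_eq]
  have h : (WithLp.equiv 2 (Fin n → ℝ)).symm (u - v) =
      (WithLp.equiv 2 (Fin n → ℝ)).symm u - (WithLp.equiv 2 (Fin n → ℝ)).symm v := by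
    apply PiLp.ext; intro i; simp [Pi.sub_apply]
  rw [h]
  exact norm_sub_le _ _

lemma vnorm_mean {n N : ℕ} (c : ℝ) (hc : 0 ≤ c) (f : Fin N → Fin n → ℝ) :
    vnorm (fun i => c * ∑ k : Fin N, f k i) ≤ c * ∑ k : Fin N, vnorm (f k) := by
  rw [vnorm_eq]
  have h : (WithLp.equiv 2 (Fin n → ℝ)).symm (fun i => c * ∑ k : Fin N, f k i) =
      c • ∑ k : Fin N, (WithLp.equiv 2 (Fin n → ℝ)).symm (f k) := by
    apply PiLp.ext; intro i
    show c * (∑ k : Fin N, f k i) = c * (∑ k : Fin N, (WithLp.equiv 2 (Fin n → ℝ)).symm (f k)) i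
    congr 1
    rw [WithLp.ofLp_sum, Finset.sum_apply]; rfl
  rw [h, norm_smul, Real.norm_eq_abs, abs_of_nonneg hc]
  refine mul_le_mul_of_nonneg_left ?_ hc
  refine le_trans (norm_sum_le _ _) (Finset.sum_le_sum fun k _ => ?_)
  rw [vnorm_eq]

lemma sum_sq_eigen {n : ℕ} {B : Matrix (Fin n) (Fin n) ℝ} (hB : B.IsHermitian) :
    ∑ i, hB.eigenvalues i ^ 2 = (B * B).trace := by
  set U := (Matrix.IsHermitian.eigenvectorUnitary hB : Matrix (Fin n) (Fin n) ℝ) with hUdef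
  set D := Matrix.diagonal ((RCLike.ofReal : ℝ → ℝ) ∘ hB.eigenvalues) with hDdef
  have hU : star U * U = 1 :=
    (Matrix.mem_unitaryGroup_iff').mp (Matrix.IsHermitian.eigenvectorUnitary hB).2
  have hBst : B = U * D * star U := hB.spectral_theorem
  have : B * B = U * (D * D) * star U := by
    rw [hBst]
    rw [show U * D * star U * (U * D * star U) = U * D * (star U * U) * D * star U by
      noncomm_ring]
    rw [hU]
    noncomm_ring
  rw [this, Matrix.trace_mul_cycle, ← Matrix.mul_assoc, hU, Matrix.one_mul, hDdef,
    Matrix.diagonal_mul_diagonal, Matrix.trace_diagonal]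
  simp [sq]

lemma edges_nonneg {n : ℕ} {B : Matrix (Fin n) (Fin n) ℝ} (h : IsAdj B) : 0 ≤ edges B := by
  refine Finset.sum_nonneg fun i _ => Finset.sum_nonneg fun j _ => ?_
  rcases h.1 i j with h01 | h01 <;> split <;> simp [h01]

lemma trace_sq_adj {n : ℕ} {B : Matrix (Fin n) (Fin n) ℝ} (h : IsAdj B) :
    (B * B).trace = 2 * edges B := by
  obtain ⟨h01, hsym, hdiag⟩ := h
  have h1 : (B * B).trace = ∑ i : Fin n, ∑ j : Fin n, B i j := by
    simp only [Matrix.trace, Matrix.diag, Matrix.mul_apply]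
    refine Finset.sum_congr rfl fun i _ => Finset.sum_congr rfl fun j _ => ?_
    rw [← hsym i j]
    rcases h01 i j with h' | h' <;> simp [h']
  rw [h1]
  have h2 : ∀ i j : Fin n, B i j =
      (if i < j then B i j else 0) + (if j < i then B i j else 0) := by
    intro i j
    rcases lt_trichotomy i j with h' | h' | h'
    · simp [h', asymm h']
    · simp [h', hdiag j]
    · simp [h', asymm h', not_lt_of_gt h']
  calc ∑ i : Fin n, ∑ j : Fin n, B i j
      = (∑ i : Fin n, ∑ j : Fin n, if i < j then B i j else 0)
        + (∑ i : Fin n, ∑ j : Fin n, if j < i then B i j else 0) := by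
        rw [← Finset.sum_add_distrib]
        refine Finset.sum_congr rfl fun i _ => ?_
        rw [← Finset.sum_add_distrib]
        exact Finset.sum_congr rfl fun j _ => h2 i j
    _ = 2 * edges B := by
        rw [Finset.sum_comm (f := fun i j => if j < i then B i j else 0)]
        have : (∑ j : Fin n, ∑ i : Fin n, if j < i then B i j else 0) = edges B := by
          refine Finset.sum_congr rfl fun j _ => Finset.sum_congr rfl fun i _ => ?_
          rw [hsym i j]
        rw [this]
        unfold edges
        ring

lemma vnorm_eigen_adj {n : ℕ} {B : Matrix (Fin n) (Fin n) ℝ} (h : IsAdj B)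
    (hB : B.IsHermitian) : vnorm hB.eigenvalues = Real.sqrt (2 * edges B) := by
  unfold vnorm
  rw [sum_sq_eigen hB, trace_sq_adj h]

set_option maxHeartbeats 1000000 in
theorem spectral_median_norm_bound {n N : ℕ} (hN : 0 < N)
    (A : Fin N → Matrix (Fin n) (Fin n) ℝ) (hadj : ∀ k, IsAdj (A k))
    (hA : ∀ k, (A k).IsHermitian)
    (M : Matrix (Fin n) (Fin n) ℝ) (hMadj : IsAdj M)
    (hM : M.IsHermitian)
    (hmin : ∀ (B : Matrix (Fin n) (Fin n) ℝ), IsAdj B → ∀ hB : B.IsHermitian,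
      ∑ k : Fin N, vnorm (hM.eigenvalues - (hA k).eigenvalues) ≤
        ∑ k : Fin N, vnorm (hB.eigenvalues - (hA k).eigenvalues))
    (hk₀ : ∃ k₀ : Fin N, vnorm ((hA k₀).eigenvalues) ≤
      vnorm (fun i => (1 : ℝ) / N * ∑ k : Fin N, (hA k).eigenvalues i)) :
    vnorm hM.eigenvalues ≤
      3 * Real.sqrt (2 * ((1 : ℝ) / N * ∑ k : Fin N, edges (A k))) := by
  classical
  obtain ⟨k₀, hk₀⟩ := hk₀
  have hNR : (0 : ℝ) < N := by exact_mod_cast hN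
  have mean_bd : vnorm (fun i => (1 : ℝ) / N * ∑ k : Fin N, (hA k).eigenvalues i) ≤
      (1 : ℝ) / N * ∑ k : Fin N, vnorm ((hA k).eigenvalues) :=
    vnorm_mean ((1 : ℝ) / N) (by positivity) _
  have hmin' := hmin (A k₀) (hadj k₀) (hA k₀)
  set S : ℝ := ∑ k : Fin N, vnorm ((hA k).eigenvalues) with hS
  have key : vnorm hM.eigenvalues ≤ (3 : ℝ) / N * S := by
    have hNsum : (N : ℝ) * vnorm hM.eigenvalues ≤
        (∑ k : Fin N, vnorm (hM.eigenvalues - (hA k).eigenvalues)) + S := by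
      calc (N : ℝ) * vnorm hM.eigenvalues = ∑ _k : Fin N, vnorm hM.eigenvalues := by
            rw [Finset.sum_const, Finset.card_univ, Fintype.card_fin, nsmul_eq_mul]
        _ ≤ ∑ k : Fin N, (vnorm (hM.eigenvalues - (hA k).eigenvalues)
              + vnorm ((hA k).eigenvalues)) :=
            Finset.sum_le_sum fun k _ => vnorm_tri _ _
        _ = _ := Finset.sum_add_distrib
    have h2 : (∑ k : Fin N, vnorm ((hA k₀).eigenvalues - (hA k).eigenvalues)) ≤
        (N : ℝ) * vnorm ((hA k₀).eigenvalues) + S := by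
      calc (∑ k : Fin N, vnorm ((hA k₀).eigenvalues - (hA k).eigenvalues))
          ≤ ∑ k : Fin N, (vnorm ((hA k₀).eigenvalues) + vnorm ((hA k).eigenvalues)) :=
            Finset.sum_le_sum fun k _ => vnorm_sub_le _ _
        _ = (N : ℝ) * vnorm ((hA k₀).eigenvalues) + S := by
            rw [Finset.sum_add_distrib, Finset.sum_const, Finset.card_univ,
              Fintype.card_fin, nsmul_eq_mul]
    have h4 : vnorm ((hA k₀).eigenvalues) ≤ (1 : ℝ) / N * S := le_trans hk₀ mean_bd
    have h5 : (N : ℝ) * ((1 : ℝ) / N * S) = S := by field_simp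
    have h6 : (N : ℝ) * vnorm ((hA k₀).eigenvalues) ≤ S := by
      calc (N : ℝ) * vnorm ((hA k₀).eigenvalues) ≤ (N : ℝ) * ((1 : ℝ) / N * S) :=
            mul_le_mul_of_nonneg_left h4 hNR.le
        _ = S := h5
    have h7 : (N : ℝ) * vnorm hM.eigenvalues ≤ 3 * S := by linarith [le_trans hmin' h2]
    rw [div_mul_eq_mul_div, le_div_iff₀ hNR]
    linarith
  have hval : ∀ k : Fin N, vnorm ((hA k).eigenvalues) = Real.sqrt (2 * edges (A k)) :=
    fun k => vnorm_eigen_adj (hadj k) (hA k)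
  have jensen : (1 : ℝ) / N * ∑ k : Fin N, Real.sqrt (2 * edges (A k)) ≤
      Real.sqrt (2 * ((1 : ℝ) / N * ∑ k : Fin N, edges (A k))) := by
    have hsq : (∑ k : Fin N, Real.sqrt (2 * edges (A k))) ^ 2 ≤
        (N : ℝ) * ∑ k : Fin N, (2 * edges (A k)) := by
      have hcs := sq_sum_le_card_mul_sum_sq (s := (Finset.univ : Finset (Fin N)))
        (f := fun k => Real.sqrt (2 * edges (A k)))
      rw [Finset.card_univ, Fintype.card_fin] at hcs
      refine le_trans hcs ?_
      refine mul_le_mul_of_nonneg_left (Finset.sum_le_sum fun k _ => ?_) (by positivity)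
      rw [Real.sq_sqrt (by linarith [edges_nonneg (hadj k)])]
    have hT0 : 0 ≤ ∑ k : Fin N, edges (A k) :=
      Finset.sum_nonneg fun k _ => edges_nonneg (hadj k)
    rw [Real.le_sqrt (by positivity) (mul_nonneg two_pos.le (mul_nonneg (by positivity) hT0)), div_mul_eq_mul_div, one_mul, div_pow,
      div_le_iff₀ (by positivity)]
    have hT : ∑ k : Fin N, (2 * edges (A k)) = 2 * ∑ k : Fin N, edges (A k) := by
      rw [Finset.mul_sum]
    have heq : 2 * ((1:ℝ) / N * ∑ k : Fin N, edges (A k)) * (N:ℝ)^2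
        = (N : ℝ) * ∑ k : Fin N, (2 * edges (A k)) := by
      rw [hT]; field_simp
    rw [heq]
    exact hsq
  have hSval : S = ∑ k : Fin N, Real.sqrt (2 * edges (A k)) :=
    Finset.sum_congr rfl fun k _ => hval k
  calc vnorm hM.eigenvalues ≤ (3 : ℝ) / N * S := key
    _ = 3 * ((1 : ℝ) / N * ∑ k : Fin N, Real.sqrt (2 * edges (A k))) := by
        rw [hSval]; ring
    _ ≤ 3 * Real.sqrt (2 * ((1 : ℝ) / N * ∑ k : Fin N, edges (A k))) := by
        linarith
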